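/- There exists an absolute constant C > 0 such that for every real λ ≥ 0, with f(k) := k·1{k ≥ 4}, the truncated Poisson variance satisfies Var_λ[f] ≤ C · E_λ[f], i.e. ∑_{k=4}^∞ e^{−λ}·λ^k/k!·k² − (∑_{k=4}^∞ e^{−λ}·λ^k/k!·k)² ≤ C · ∑_{k=4}^∞ e^{−λ}·λ^k/k!·k. -/

import Mathlib

theorem stmt3 : ∃ C : ℝ, 0 < C ∧ ∀ lam : ℝ, 0 ≤ lam →
    (∑' k : ℕ, Real.exp (-lam) * lam ^ k / (Nat.factorial k) *
        ((k : ℝ) * (if 4 ≤ k then 1 else 0)) ^ 2)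
      - (∑' k : ℕ, Real.exp (-lam) * lam ^ k / (Nat.factorial k) *
        ((k : ℝ) * (if 4 ≤ k then 1 else 0))) ^ 2
    ≤ C * ∑' k : ℕ, Real.exp (-lam) * lam ^ k / (Nat.factorial k) *
        ((k : ℝ) * (if 4 ≤ k then 1 else 0)) := by
  refine ⟨30, by norm_num, ?_⟩
  intro lam hl
  set t := Real.exp (-lam) with ht
  set E := Real.exp lam with hE
  have htpos : 0 < t := Real.exp_pos _
  have hte : t * E = 1 := by
    rw [ht, hE, ← Real.exp_add]; simp
  have hexp : HasSum (fun n : ℕ => lam ^ n / (Nat.factorial n : ℝ)) E := by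
    rw [hE, Real.exp_eq_exp_ℝ]
    exact NormedSpace.expSeries_div_hasSum_exp lam
  have hh : HasSum (fun n : ℕ => t * lam ^ n / (Nat.factorial n : ℝ)) 1 := by
    have h2 := hexp.mul_left t
    simp only [← mul_div_assoc] at h2
    rwa [hte] at h2
  -- shifted sums
  have h3 : HasSum (fun n : ℕ => t * lam ^ (n + 3) / (Nat.factorial (n + 3) : ℝ))
      (1 - (t + t * lam + t * lam ^ 2 / 2)) := by
    have := (hasSum_nat_add_iff'
      (f := fun n : ℕ => t * lam ^ n / (Nat.factorial n : ℝ)) 3).2 hh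
    convert this using 2
    all_goals norm_num [Finset.sum_range_succ, Nat.factorial]
    rfl
  have h2 : HasSum (fun n : ℕ => t * lam ^ (n + 2) / (Nat.factorial (n + 2) : ℝ))
      (1 - (t + t * lam)) := by
    have := (hasSum_nat_add_iff'
      (f := fun n : ℕ => t * lam ^ n / (Nat.factorial n : ℝ)) 2).2 hh
    convert this using 2
    all_goals norm_num [Finset.sum_range_succ, Nat.factorial]
    rfl
  set Q3 : ℝ := 1 - (t + t * lam + t * lam ^ 2 / 2) with hQ3
  set Q2 : ℝ := 1 - (t + t * lam) with hQ2
  -- first moment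
  have hT1 : HasSum (fun k : ℕ => t * lam ^ k / (Nat.factorial k : ℝ) *
      ((k : ℝ) * (if 4 ≤ k then 1 else 0))) (lam * Q3) := by
    refine (hasSum_nat_add_iff' 4).1 ?_
    have hz : (∑ i ∈ Finset.range 4, t * lam ^ i / (Nat.factorial i : ℝ) *
        ((i : ℝ) * (if 4 ≤ i then 1 else 0))) = 0 := by
      norm_num [Finset.sum_range_succ]
    rw [hz, sub_zero]
    have hfun : (fun n : ℕ => t * lam ^ (n + 4) / (Nat.factorial (n + 4) : ℝ) *
        (((n + 4 : ℕ) : ℝ) * (if 4 ≤ n + 4 then 1 else 0)))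
        = fun n : ℕ => lam * (t * lam ^ (n + 3) / (Nat.factorial (n + 3) : ℝ)) := by
      funext n
      rw [if_pos (by omega)]
      have hfac : (Nat.factorial (n + 4) : ℝ) = ((n : ℝ) + 4) * (Nat.factorial (n + 3) : ℝ) := by
        rw [Nat.factorial_succ]; push_cast; ring
      have hne : (Nat.factorial (n + 3) : ℝ) ≠ 0 := by positivity
      have hne4 : ((n : ℝ) + 4) ≠ 0 := by positivity
      rw [hfac]
      push_cast
      field_simp
      ring
    rw [hfun]
    exact h3.mul_left lam
  -- second moment
  have hT2 : HasSum (fun k : ℕ => t * lam ^ k / (Nat.factorial k : ℝ) *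
      ((k : ℝ) * (if 4 ≤ k then 1 else 0)) ^ 2) (lam ^ 2 * Q2 + lam * Q3) := by
    refine (hasSum_nat_add_iff' 4).1 ?_
    have hz : (∑ i ∈ Finset.range 4, t * lam ^ i / (Nat.factorial i : ℝ) *
        ((i : ℝ) * (if 4 ≤ i then 1 else 0)) ^ 2) = 0 := by
      norm_num [Finset.sum_range_succ]
    rw [hz, sub_zero]
    have hfun : (fun n : ℕ => t * lam ^ (n + 4) / (Nat.factorial (n + 4) : ℝ) *
        (((n + 4 : ℕ) : ℝ) * (if 4 ≤ n + 4 then 1 else 0)) ^ 2)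
        = fun n : ℕ => lam ^ 2 * (t * lam ^ (n + 2) / (Nat.factorial (n + 2) : ℝ))
            + lam * (t * lam ^ (n + 3) / (Nat.factorial (n + 3) : ℝ)) := by
      funext n
      rw [if_pos (by omega)]
      have hfac4 : (Nat.factorial (n + 4) : ℝ) = ((n : ℝ) + 4) * (((n : ℝ) + 3) *
          (Nat.factorial (n + 2) : ℝ)) := by
        rw [show n + 4 = (n + 3) + 1 by ring, Nat.factorial_succ,
          show n + 3 = (n + 2) + 1 by ring, Nat.factorial_succ]
        push_cast; ring
      have hfac3 : (Nat.factorial (n + 3) : ℝ) = ((n : ℝ) + 3) *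
          (Nat.factorial (n + 2) : ℝ) := by
        rw [show n + 3 = (n + 2) + 1 by ring, Nat.factorial_succ]; push_cast; ring
      have hne : (Nat.factorial (n + 2) : ℝ) ≠ 0 := by positivity
      have hne4 : ((n : ℝ) + 4) ≠ 0 := by positivity
      have hne3 : ((n : ℝ) + 3) ≠ 0 := by positivity
      rw [hfac4, hfac3]
      push_cast
      field_simp
      ring
    rw [hfun]
    exact (h2.mul_left (lam ^ 2)).add (h3.mul_left lam)
  rw [hT1.tsum_eq, hT2.tsum_eq]
  -- Taylor lower bound
  have hE3 : 1 + lam + lam ^ 2 / 2 + lam ^ 3 / 6 ≤ E := by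
    have h := Real.sum_le_exp_of_nonneg hl 4
    norm_num [Finset.sum_range_succ, Nat.factorial] at h
    rw [← hE] at h
    linarith
  have hQ2eq : Q2 = t * (E - 1 - lam) := by
    rw [hQ2]; linear_combination -hte
  have hQ3eq : Q3 = t * (E - 1 - lam - lam ^ 2 / 2) := by
    rw [hQ3]; linear_combination -hte
  rcases le_or_gt lam 3 with hc | hc
  · -- small lambda: lam * (E-1-lam) ≤ 29 * (E-1-lam-lam^2/2)
    have hkey : lam * (E - 1 - lam) ≤ 29 * (E - 1 - lam - lam ^ 2 / 2) := by
      nlinarith [hE3, hl, hc, sq_nonneg lam, pow_nonneg hl 3, pow_nonneg hl 4]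
    have h1 : lam ^ 2 * Q2 ≤ 29 * (lam * Q3) := by
      rw [hQ2eq, hQ3eq]
      nlinarith [mul_le_mul_of_nonneg_left hkey htpos.le, hl, htpos.le,
        mul_nonneg htpos.le (mul_nonneg hl hl)]
    nlinarith [h1, sq_nonneg (lam * Q3)]
  · -- large lambda
    have hkey : lam + lam ^ 2 + lam ^ 3 ≤ 29 * (E - 1 - lam - lam ^ 2 / 2) := by
      nlinarith [hE3, hc]
    have hQ3nn : 0 ≤ Q3 := by
      rw [hQ3eq]
      have : 0 ≤ E - 1 - lam - lam ^ 2 / 2 := by nlinarith [hE3, hl, pow_nonneg hl 3]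
      positivity
    have hdiff : lam * (Q2 - Q3 ^ 2) ≤ 29 * Q3 := by
      have hineq : Q2 - Q3 ^ 2 ≤ (Q2 - Q3) + (1 - Q3) := by nlinarith [sq_nonneg (1 - Q3)]
      have h2 : lam * (Q2 - Q3 ^ 2) ≤ lam * ((Q2 - Q3) + (1 - Q3)) :=
        mul_le_mul_of_nonneg_left hineq hl
      have h3 : lam * ((Q2 - Q3) + (1 - Q3)) = t * (lam + lam ^ 2 + lam ^ 3) := by
        rw [hQ2, hQ3]; ring
      have h4 : t * (lam + lam ^ 2 + lam ^ 3) ≤ t * (29 * (E - 1 - lam - lam ^ 2 / 2)) :=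
        mul_le_mul_of_nonneg_left hkey htpos.le
      have h5 : t * (29 * (E - 1 - lam - lam ^ 2 / 2)) = 29 * Q3 := by
        rw [hQ3eq]; ring
      calc lam * (Q2 - Q3 ^ 2) ≤ lam * (Q2 - Q3 + (1 - Q3)) := h2
        _ = t * (lam + lam ^ 2 + lam ^ 3) := h3
        _ ≤ t * (29 * (E - 1 - lam - lam ^ 2 / 2)) := h4
        _ = 29 * Q3 := h5
    nlinarith [mul_le_mul_of_nonneg_left hdiff hl, hQ3nn, hl]
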